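/- Let R be a finite nonempty set of elements of the Pauli group 𝒫 (on n qudits of dimension D) that contains the identity matrix, is closed under matrix multiplication, and is linearly independent over ℂ as a family of matrices. Let p and q be elements of 𝒫. Then: (i) the family (p·r)_{r∈R} is linearly independent over ℂ; (ii) exactly one of the following holds: either there exist a complex number c and an element r ∈ R with p = c·(q·r) — in which case every element of p·R is c times an element of q·R — or the family of 2·|R| matrices consisting of all products p·r together with all products q·r for r ∈ R is linearly independent over ℂ. -/

import Mathlib

/-- The Pauli product `E(x,z)` representing `X^{x₁}Z^{z₁} ⊗ ⋯ ⊗ X^{xₙ}Z^{zₙ}` on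
`n` qudits of dimension `D`, as a matrix indexed by `Fin n → ZMod D`. -/
noncomputable def pauliE (D n : ℕ) (x z : Fin n → ZMod D) :
    Matrix (Fin n → ZMod D) (Fin n → ZMod D) ℂ :=
  fun a b =>
    if a = b - x then
      Complex.exp ((2 * (Real.pi : ℂ) * Complex.I / (D : ℂ)) * (((∑ i, z i * b i).val : ℂ)))
    else 0

/-- The Pauli group on `n` qudits of dimension `D`: phases `exp(2πi·l/D)` times Pauli
products. -/
noncomputable def pauliGroup (D n : ℕ) :
    Set (Matrix (Fin n → ZMod D) (Fin n → ZMod D) ℂ) :=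
  {P | ∃ (l : ℕ) (x z : Fin n → ZMod D),
    P = Complex.exp (2 * (Real.pi : ℂ) * Complex.I * (l : ℂ) / (D : ℂ)) • pauliE D n x z}

namespace PauliAux

variable {D n : ℕ} [NeZero D]

lemma pauliE_apply (x z a b : Fin n → ZMod D) :
    pauliE D n x z a b
      = if a = b - x then ZMod.stdAddChar (∑ i, z i * b i) else 0 := by
  rw [pauliE, ZMod.stdAddChar_apply, ZMod.toCircle_apply]
  split_ifs with h
  · congr 1; ring
  · rfl

lemma stdAddChar_ne_zero (j : ZMod D) : ZMod.stdAddChar j ≠ 0 := by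
  rw [ZMod.stdAddChar_apply]
  exact Circle.coe_ne_zero _

lemma star_stdAddChar (j : ZMod D) :
    star (ZMod.stdAddChar j : ℂ) = ZMod.stdAddChar (-j) := by
  rw [ZMod.stdAddChar_apply, ZMod.stdAddChar_apply, AddChar.map_neg_eq_inv,
    Circle.coe_inv_eq_conj]
  rfl

lemma char_sum_zero {w : Fin n → ZMod D} (hw : w ≠ 0) :
    ∑ b : Fin n → ZMod D, ZMod.stdAddChar (∑ i, w i * b i) = (0 : ℂ) := by
  classical
  let L : (Fin n → ZMod D) →+ ZMod D :=
    { toFun := fun b => ∑ i, w i * b i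
      map_zero' := by simp
      map_add' := by intro a b; simp [mul_add, Finset.sum_add_distrib] }
  have hne : ((ZMod.stdAddChar (N := D)).compAddMonoidHom L) ≠ 1 := by
    rw [AddChar.ne_one_iff]
    obtain ⟨i, hi⟩ : ∃ i, w i ≠ 0 := by
      by_contra h; push_neg at h; exact hw (funext h)
    have hprim := ZMod.isPrimitive_stdAddChar D hi
    rw [AddChar.ne_one_iff] at hprim
    obtain ⟨t, ht⟩ := hprim
    refine ⟨Pi.single i t, ?_⟩
    rw [AddChar.mulShift_apply] at ht
    have : (L (Pi.single i t)) = w i * t := by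
      simp only [L, AddMonoidHom.coe_mk, ZeroHom.coe_mk, Pi.single_apply, mul_ite, mul_zero]
      simp
    simpa [this] using ht
  have := AddChar.sum_eq_zero_of_ne_one hne
  simpa [L] using this

lemma E_mul (x z x' z' : Fin n → ZMod D) :
    pauliE D n x z * pauliE D n x' z'
      = ZMod.stdAddChar (- ∑ i, z i * x' i) • pauliE D n (x + x') (z + z') := by
  classical
  funext a b
  rw [Matrix.mul_apply, Matrix.smul_apply]
  have key : ∀ c, pauliE D n x z a c * pauliE D n x' z' c b
      = if c = b - x' then pauliE D n x z a c * ZMod.stdAddChar (∑ i, z' i * b i) else 0 := by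
    intro c
    rw [pauliE_apply x' z']
    split_ifs with h <;> simp
  rw [Finset.sum_congr rfl fun c _ => key c, Finset.sum_ite_eq' Finset.univ (b - x'),
    if_pos (Finset.mem_univ _), pauliE_apply, pauliE_apply, smul_eq_mul]
  by_cases h : a = b - (x + x')
  · have h' : a = b - x' - x := by rw [h, sub_sub, add_comm x' x]
    rw [if_pos h', if_pos h, ← AddChar.map_add_eq_mul, ← AddChar.map_add_eq_mul]
    congr 1
    have : ∀ i, z i * (b - x') i = z i * b i - z i * x' i := by
      intro i; simp [Pi.sub_apply, mul_sub]
    rw [Finset.sum_congr rfl fun i _ => this i, Finset.sum_sub_distrib]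
    have : ∀ i, (z + z') i * b i = z i * b i + z' i * b i := by
      intro i; simp [Pi.add_apply, add_mul]
    rw [Finset.sum_congr rfl fun i _ => this i, Finset.sum_add_distrib]
    abel
  · have h' : ¬ (a = b - x' - x) := by rw [sub_sub, add_comm x' x]; exact h
    rw [if_neg h', if_neg h, zero_mul, mul_zero]

lemma E_zero_zero : pauliE D n 0 0 = (1 : Matrix (Fin n → ZMod D) (Fin n → ZMod D) ℂ) := by
  funext a b
  rw [pauliE_apply, Matrix.one_apply]
  simp [eq_comm]

end PauliAux

namespace Part2
open Matrix
variable {D n : ℕ} [NeZero D]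
open PauliAux

lemma trace_E (x z x' z' : Fin n → ZMod D) :
    ((pauliE D n x z)ᴴ * pauliE D n x' z').trace
      = if x = x' ∧ z = z' then ((D : ℂ) ^ n) else 0 := by
  classical
  have hterm : ∀ b : Fin n → ZMod D,
      ((pauliE D n x z)ᴴ * pauliE D n x' z') b b
        = if x = x' then
            star (ZMod.stdAddChar (∑ i, z i * b i)) * ZMod.stdAddChar (∑ i, z' i * b i)
          else 0 := by
    intro b
    rw [Matrix.mul_apply]
    rw [Finset.sum_eq_single (b - x)]
    · rw [Matrix.conjTranspose_apply, pauliE_apply, pauliE_apply, if_pos rfl]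
      by_cases hx : x = x'
      · subst hx; rw [if_pos rfl, if_pos rfl]
      · rw [if_neg (fun h => hx (by rwa [sub_right_inj] at h)), if_neg hx, mul_zero]
    · intro a _ ha
      rw [Matrix.conjTranspose_apply, pauliE_apply, if_neg ha, star_zero, zero_mul]
    · simp
  have htr : ((pauliE D n x z)ᴴ * pauliE D n x' z').trace
      = ∑ b : Fin n → ZMod D, ((pauliE D n x z)ᴴ * pauliE D n x' z') b b := rfl
  rw [htr, Finset.sum_congr rfl fun b _ => hterm b]
  by_cases hx : x = x'
  · subst hx
    simp only [eq_self_iff_true, if_true, true_and]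
    have hstep : ∀ b : Fin n → ZMod D,
        star (ZMod.stdAddChar (∑ i, z i * b i)) * ZMod.stdAddChar (∑ i, z' i * b i)
          = ZMod.stdAddChar (∑ i, (z' - z) i * b i) := by
      intro b
      rw [star_stdAddChar, ← AddChar.map_add_eq_mul]
      congr 1
      have : ∀ i, (z' - z) i * b i = z' i * b i - z i * b i := by
        intro i; simp [Pi.sub_apply, sub_mul]
      rw [Finset.sum_congr rfl fun i _ => this i, Finset.sum_sub_distrib]
      abel
    rw [Finset.sum_congr rfl fun b _ => hstep b]
    by_cases hz : z = z'
    · subst hz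
      simp only [sub_self, if_pos rfl]
      have : ∀ b : Fin n → ZMod D, ZMod.stdAddChar (∑ i, (0 : Fin n → ZMod D) i * b i) = (1 : ℂ) := by
        intro b; simp
      rw [Finset.sum_congr rfl fun b _ => this b, Finset.sum_const, nsmul_eq_mul, mul_one]
      simp [ZMod.card]
    · rw [if_neg (fun h => hz h), char_sum_zero (sub_ne_zero.mpr (Ne.symm hz))]
  · simp [hx]

/-- "Scaled Pauli": a nonzero multiple of a Pauli product. -/
def IsSP (D n : ℕ) [NeZero D] (P : Matrix (Fin n → ZMod D) (Fin n → ZMod D) ℂ) : Prop :=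
  ∃ (c : ℂ) (x z : Fin n → ZMod D), c ≠ 0 ∧ P = c • pauliE D n x z

lemma sp_of_mem {P : Matrix (Fin n → ZMod D) (Fin n → ZMod D) ℂ}
    (h : P ∈ pauliGroup D n) : IsSP D n P := by
  obtain ⟨l, x, z, hP⟩ := h
  exact ⟨_, x, z, Complex.exp_ne_zero _, hP⟩

lemma sp_mul {P Q : Matrix (Fin n → ZMod D) (Fin n → ZMod D) ℂ}
    (hP : IsSP D n P) (hQ : IsSP D n Q) : IsSP D n (P * Q) := by
  obtain ⟨c, x, z, hc, rfl⟩ := hP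
  obtain ⟨c', x', z', hc', rfl⟩ := hQ
  refine ⟨c * c' * ZMod.stdAddChar (- ∑ i, z i * x' i), x + x', z + z',
    mul_ne_zero (mul_ne_zero hc hc') (stdAddChar_ne_zero _), ?_⟩
  rw [smul_mul_assoc, mul_smul_comm, E_mul, smul_smul, smul_smul, mul_assoc]

lemma sp_isUnit {P : Matrix (Fin n → ZMod D) (Fin n → ZMod D) ℂ}
    (hP : IsSP D n P) : IsUnit P := by
  obtain ⟨c, x, z, hc, rfl⟩ := hP
  have h1 : pauliE D n x z * pauliE D n (-x) (-z)
      = ZMod.stdAddChar (- ∑ i, z i * (-x) i) • (1 : Matrix (Fin n → ZMod D) (Fin n → ZMod D) ℂ) := by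
    rw [E_mul]
    simp [E_zero_zero]
  apply IsUnit.of_mul_eq_one
    (b := (c * ZMod.stdAddChar (- ∑ i, z i * (-x) i))⁻¹ • pauliE D n (-x) (-z))
  rw [smul_mul_assoc, mul_smul_comm, h1, smul_smul, smul_smul]
  have hs : ∀ (u v : ℂ), u ≠ 0 → v ≠ 0 → u * (u * v)⁻¹ * v = 1 := by
    intro u v hu hv
    rw [mul_inv]
    field_simp
  rw [hs c _ hc (stdAddChar_ne_zero _), one_smul]

lemma sp_ne_zero {P : Matrix (Fin n → ZMod D) (Fin n → ZMod D) ℂ}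
    (hP : IsSP D n P) : P ≠ 0 := by
  obtain ⟨c, x, z, hc, rfl⟩ := hP
  intro h
  have := congrFun (congrFun h (0 - x)) 0
  rw [Matrix.smul_apply, pauliE_apply, if_pos rfl] at this
  simp only [Matrix.zero_apply, smul_eq_mul] at this
  exact mul_ne_zero hc (stdAddChar_ne_zero _) this

lemma li_of_disjoint_labels {ι : Type} [Fintype ι]
    (c : ι → ℂ) (x z : ι → Fin n → ZMod D)
    (hc : ∀ k, c k ≠ 0)
    (hinj : Function.Injective fun k => (x k, z k)) :
    LinearIndependent ℂ (fun k => c k • pauliE D n (x k) (z k)) := by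
  classical
  rw [Fintype.linearIndependent_iff]
  intro g hg j
  have h0 := congrArg (fun A => ((pauliE D n (x j) (z j))ᴴ * A).trace) hg
  simp only [Matrix.mul_sum, Matrix.trace_sum, Matrix.mul_smul, Matrix.trace_smul,
    Matrix.mul_zero, Matrix.trace_zero, smul_eq_mul] at h0
  rw [Finset.sum_eq_single j] at h0
  · rw [trace_E, if_pos ⟨rfl, rfl⟩] at h0
    have hD : ((D : ℂ) ^ n) ≠ 0 :=
      pow_ne_zero _ (Nat.cast_ne_zero.mpr (NeZero.ne D))
    rcases mul_eq_zero.mp h0 with h | h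
    · exact h
    · exact absurd (mul_eq_zero.mp h) (by simp [hc j, hD])
  · intro k _ hkj
    rw [trace_E, if_neg, mul_zero, mul_zero]
    rintro ⟨h1, h2⟩
    exact hkj (hinj (by simp [Prod.ext_iff, h1.symm, h2.symm]) ).symm
  · simp

lemma li_of_pairwise_nonprop {ι : Type} [Fintype ι]
    (F : ι → Matrix (Fin n → ZMod D) (Fin n → ZMod D) ℂ)
    (hSP : ∀ k, IsSP D n (F k))
    (h : ∀ k k' (e : ℂ), e ≠ 0 → F k = e • F k' → k = k') :
    LinearIndependent ℂ F := by
  choose c x z hc hF using hSP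
  have hFe : F = fun k => c k • pauliE D n (x k) (z k) := funext hF
  rw [hFe]
  apply li_of_disjoint_labels c x z hc
  intro k k' hkk'
  have hx : x k = x k' := congrArg Prod.fst hkk'
  have hz : z k = z k' := congrArg Prod.snd hkk'
  apply h k k' (c k / c k') (div_ne_zero (hc k) (hc k'))
  rw [hF k, hF k', hx, hz, smul_smul, div_mul_cancel₀ _ (hc k')]

lemma eq_of_li_smul {ι : Type*} {V : Type*} [AddCommGroup V] [Module ℂ V]
    {f : ι → V} (hf : LinearIndependent ℂ f) {i j : ι} {e : ℂ} (h : f i = e • f j) :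
    i = j := by
  by_contra hij
  have hinj : Function.Injective ![i, j] := by
    intro a b hab
    fin_cases a <;> fin_cases b <;> simp_all
  have h2 : LinearIndependent ℂ (f ∘ ![i, j]) := hf.comp _ hinj
  have h3 : LinearIndependent ℂ ![f i, f j] := by
    have : f ∘ ![i, j] = ![f i, f j] := by
      funext k; fin_cases k <;> rfl
    rwa [this] at h2
  have h4 := (LinearIndependent.pair_iff.mp h3 1 (-e) (by rw [one_smul, neg_smul, h]; abel)).1
  exact one_ne_zero h4

end Part2


open Part2 PauliAux

/-- Lemma on cosets of linearly independent subgroups of the Pauli group: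
(i) `p·R` is linearly independent; (ii) exactly one of: `p = c·(q·r)` for some phase
`c` and `r ∈ R` (in which case every element of `p·R` is `c` times an element of
`q·R`), or the `2|R|` matrices `p·R ∪ q·R` are linearly independent. -/
theorem pauli_coset_lemma (D n : ℕ) [NeZero D] (hn : 1 ≤ n)
    (R : Finset (Matrix (Fin n → ZMod D) (Fin n → ZMod D) ℂ))
    (hRP : ∀ r ∈ R, r ∈ pauliGroup D n)
    (hR1 : (1 : Matrix (Fin n → ZMod D) (Fin n → ZMod D) ℂ) ∈ R)
    (hRmul : ∀ a ∈ R, ∀ b ∈ R, a * b ∈ R)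
    (hRli : LinearIndependent ℂ
      (fun r : R => (r : Matrix (Fin n → ZMod D) (Fin n → ZMod D) ℂ)))
    (p q : Matrix (Fin n → ZMod D) (Fin n → ZMod D) ℂ)
    (hp : p ∈ pauliGroup D n) (hq : q ∈ pauliGroup D n) :
    LinearIndependent ℂ
      (fun r : R => p * (r : Matrix (Fin n → ZMod D) (Fin n → ZMod D) ℂ)) ∧
    Xor'
      (∃ c : ℂ, (∃ r ∈ R, p = c • (q * r)) ∧
        ∀ r ∈ R, ∃ r' ∈ R, p * r = c • (q * r'))
      (LinearIndependent ℂ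
        (Sum.elim (fun r : R => p * (r : Matrix (Fin n → ZMod D) (Fin n → ZMod D) ℂ))
          (fun r : R => q * (r : Matrix (Fin n → ZMod D) (Fin n → ZMod D) ℂ)))) := by
  classical
  have hsp : IsSP D n p := sp_of_mem hp
  have hsq : IsSP D n q := sp_of_mem hq
  have hspr : ∀ r : R, IsSP D n (r : Matrix (Fin n → ZMod D) (Fin n → ZMod D) ℂ) :=
    fun r => sp_of_mem (hRP r r.2)
  -- cancellation by a unit
  have cancel : ∀ (u : Matrix (Fin n → ZMod D) (Fin n → ZMod D) ℂ), IsUnit u →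
      ∀ (a b : Matrix (Fin n → ZMod D) (Fin n → ZMod D) ℂ) (e : ℂ),
      u * a = e • (u * b) → a = e • b := by
    intro u hu a b e h
    obtain ⟨v, rfl⟩ := hu
    calc a = ↑v⁻¹ * (↑v * a) := by rw [← mul_assoc, Units.inv_mul, one_mul]
    _ = ↑v⁻¹ * (e • (↑v * b)) := by rw [h]
    _ = e • (↑v⁻¹ * (↑v * b)) := (mul_smul_comm _ _ _)
    _ = e • b := by rw [← mul_assoc, Units.inv_mul, one_mul]
  -- left multiplication by a scaled Pauli preserves independence of R
  have li_mul : ∀ u, IsSP D n u →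
      LinearIndependent ℂ
        (fun r : R => u * (r : Matrix (Fin n → ZMod D) (Fin n → ZMod D) ℂ)) := by
    intro u hsu
    apply li_of_pairwise_nonprop _ (fun r => sp_mul hsu (hspr r))
    intro k k' e he h
    have hk : (k : Matrix (Fin n → ZMod D) (Fin n → ZMod D) ℂ) = e • (k' : _) :=
      cancel u (sp_isUnit hsu) _ _ e h
    exact eq_of_li_smul hRli hk
  refine ⟨li_mul p hsp, ?_⟩
  -- inverses inside R
  have hinv : ∀ r ∈ R, ∃ s ∈ R,
      (r * s : Matrix (Fin n → ZMod D) (Fin n → ZMod D) ℂ) = 1 := by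
    intro r hr
    have hu : IsUnit r := sp_isUnit (sp_of_mem (hRP r hr))
    let f : R → R := fun s => ⟨r * s, hRmul r hr s s.2⟩
    have hfin : Function.Injective f := by
      intro a b hab
      have h2 : r * (a : Matrix (Fin n → ZMod D) (Fin n → ZMod D) ℂ) = r * b :=
        congrArg Subtype.val hab
      exact Subtype.ext (hu.mul_left_cancel h2)
    obtain ⟨s, hs⟩ := (Finite.injective_iff_surjective.mp hfin) ⟨1, hR1⟩
    exact ⟨s, s.2, congrArg Subtype.val hs⟩
  by_cases hA : ∃ c : ℂ, ∃ r ∈ R, p = c • (q * r)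
  · left
    obtain ⟨c, r0, hr0, hpc⟩ := hA
    constructor
    · exact ⟨c, ⟨r0, hr0, hpc⟩, fun r hr =>
        ⟨r0 * r, hRmul _ hr0 _ hr, by rw [hpc, smul_mul_assoc, mul_assoc]⟩⟩
    · intro hli
      rw [Fintype.linearIndependent_iff] at hli
      set i1 : R := ⟨1, hR1⟩ with hi1
      set ir : R := ⟨r0, hr0⟩ with hir
      have hg := hli (Sum.elim (fun r : R => if r = i1 then 1 else 0)
        (fun r : R => if r = ir then -c else 0)) ?_ (Sum.inl i1)
      · simp at hg
      · rw [Fintype.sum_sum_type]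
        simp only [Sum.elim_inl, Sum.elim_inr, ite_smul, one_smul, zero_smul, neg_smul]
        rw [Finset.sum_ite_eq' Finset.univ i1, Finset.sum_ite_eq' Finset.univ ir,
          if_pos (Finset.mem_univ _), if_pos (Finset.mem_univ _)]
        show p * ((1 : Matrix (Fin n → ZMod D) (Fin n → ZMod D) ℂ)) +
          -(c • (q * (r0 : Matrix (Fin n → ZMod D) (Fin n → ZMod D) ℂ))) = 0
        rw [mul_one, hpc]
        abel
  · right
    have cross : ∀ (r r' : R) (e : ℂ),
        p * (r : Matrix (Fin n → ZMod D) (Fin n → ZMod D) ℂ) = e • (q * (r' : _)) → False := by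
      intro r r' e h
      obtain ⟨s, hsR, hs1⟩ := hinv r r.2
      apply hA
      refine ⟨e, (r' : Matrix (Fin n → ZMod D) (Fin n → ZMod D) ℂ) * s,
        hRmul _ r'.2 _ hsR, ?_⟩
      calc p = p * ((r : Matrix (Fin n → ZMod D) (Fin n → ZMod D) ℂ) * s) := by
              rw [hs1, mul_one]
      _ = (p * (r : Matrix (Fin n → ZMod D) (Fin n → ZMod D) ℂ)) * s := by rw [mul_assoc]
      _ = e • (q * ((r' : Matrix (Fin n → ZMod D) (Fin n → ZMod D) ℂ) * s)) := by
              rw [h, smul_mul_assoc, mul_assoc]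
    constructor
    · apply li_of_pairwise_nonprop
      · rintro (r | r)
        exacts [sp_mul hsp (hspr r), sp_mul hsq (hspr r)]
      · rintro (r | r) (r' | r') e he h <;>
          simp only [Sum.elim_inl, Sum.elim_inr] at h
        · exact congrArg Sum.inl
            (eq_of_li_smul hRli (cancel p (sp_isUnit hsp) _ _ e h))
        · exact (cross r r' e h).elim
        · exact (cross r' r e⁻¹
            (by rw [h, smul_smul, inv_mul_cancel₀ he, one_smul])).elim
        · exact congrArg Sum.inr
            (eq_of_li_smul hRli (cancel q (sp_isUnit hsq) _ _ e h))
    · rintro ⟨c, ⟨r, hr, hpr⟩, -⟩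
      exact hA ⟨c, r, hr, hpr⟩
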